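/- Assume κ ≥ 4, ε > 0 and τ > 0, and let u⁰ ∈ ℝ^m satisfy ‖u⁰‖ ≤ 1 and |Σ_{i=1}^m u⁰_i| < m. Define iterates by u^{n+1} = Ψ_τ(uⁿ) for n ≥ 0. Then the discrete maximum bound principle holds unconditionally: ‖uⁿ‖ ≤ 1 for every n ≥ 0. -/

import Mathlib

open MeasureTheory

/-- The nonlinearity f(x) = x − x³. -/
noncomputable def fpt (x : ℝ) : ℝ := x - x ^ 3

/-- The function g(x) = 1 − x². -/
noncomputable def gpt (x : ℝ) : ℝ := 1 - x ^ 2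

/-- The Lagrange multiplier λ(v) = (Σᵢ f(vᵢ)) / (Σᵢ g(vᵢ)). -/
noncomputable def lam {m : ℕ} (v : Fin m → ℝ) : ℝ :=
  (∑ i, fpt (v i)) / (∑ i, gpt (v i))

/-- The stabilized nonlinear term N_κ(v)ᵢ = κ vᵢ + f(vᵢ) − λ(v) g(vᵢ). -/
noncomputable def Nk {m : ℕ} (κ : ℝ) (v : Fin m → ℝ) : Fin m → ℝ :=
  fun i => κ * v i + fpt (v i) - lam v * gpt (v i)

/-- The stabilized linear operator L_κ = ε²A − κ·Id. -/
noncomputable def Lk {m : ℕ} (A : (Fin m → ℝ) →L[ℝ] (Fin m → ℝ)) (ε κ : ℝ) :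
    (Fin m → ℝ) →L[ℝ] (Fin m → ℝ) :=
  ε ^ 2 • A - κ • ContinuousLinearMap.id ℝ (Fin m → ℝ)

/-- The ETD1 step Φ_τ(v) = exp(τL_κ)v + ∫₀^τ exp((τ−s)L_κ) N_κ(v) ds. -/
noncomputable def Phi {m : ℕ} (A : (Fin m → ℝ) →L[ℝ] (Fin m → ℝ)) (ε κ τ : ℝ)
    (v : Fin m → ℝ) : Fin m → ℝ :=
  (NormedSpace.exp (τ • Lk A ε κ)) v +
    ∫ s in (0 : ℝ)..τ, (NormedSpace.exp ((τ - s) • Lk A ε κ)) (Nk κ v)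

/-- The ETDRK2 step
Ψ_τ(v) = exp(τL_κ)v + ∫₀^τ exp((τ−s)L_κ)[(1−s/τ)N_κ(v) + (s/τ)N_κ(Φ_τ(v))] ds. -/
noncomputable def Psi {m : ℕ} (A : (Fin m → ℝ) →L[ℝ] (Fin m → ℝ)) (ε κ τ : ℝ)
    (v : Fin m → ℝ) : Fin m → ℝ :=
  (NormedSpace.exp (τ • Lk A ε κ)) v +
    ∫ s in (0 : ℝ)..τ, (NormedSpace.exp ((τ - s) • Lk A ε κ))
      ((1 - s / τ) • Nk κ v + (s / τ) • Nk κ (Phi A ε κ τ v))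

/-- exp(t L_κ) splits as a scalar times exp((t ε²) A). -/
lemma exp_Lk_eq {m : ℕ} (A : (Fin m → ℝ) →L[ℝ] (Fin m → ℝ)) (ε κ t : ℝ) :
    NormedSpace.exp (t • Lk A ε κ) =
      Real.exp (-(κ * t)) • NormedSpace.exp ((t * ε ^ 2) • A) := by
  have h1 : t • Lk A ε κ = (t * ε ^ 2) • A +
      (-(κ * t)) • (1 : (Fin m → ℝ) →L[ℝ] (Fin m → ℝ)) := by
    ext v i
    simp [Lk, ContinuousLinearMap.smul_apply, ContinuousLinearMap.sub_apply,
      ContinuousLinearMap.one_apply, smul_eq_mul, Pi.smul_apply, Pi.sub_apply,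
      Pi.add_apply]
    ring
  let +nondep : NormedAlgebra ℚ ((Fin m → ℝ) →L[ℝ] (Fin m → ℝ)) := .restrictScalars ℚ ℝ _
  rw [h1, NormedSpace.exp_add_of_commute ((Commute.one_right ((t * ε ^ 2) • A)).smul_right _)]
  have h2 : ((-(κ * t)) • (1 : (Fin m → ℝ) →L[ℝ] (Fin m → ℝ))) =
      algebraMap ℝ _ (-(κ * t)) := (Algebra.algebraMap_eq_smul_one _).symm
  rw [h2, ← NormedSpace.algebraMap_exp_comm, ← Real.exp_eq_exp_ℝ,
    Algebra.algebraMap_eq_smul_one, mul_smul_comm, mul_one]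

/-- Contraction estimate for the stabilized semigroup. -/
lemma exp_Lk_apply_le {m : ℕ} {A : (Fin m → ℝ) →L[ℝ] (Fin m → ℝ)}
    (hC : ∀ t : ℝ, 0 ≤ t → ∀ v : Fin m → ℝ, ‖(NormedSpace.exp (t • A)) v‖ ≤ ‖v‖)
    (ε κ : ℝ) {t : ℝ} (ht : 0 ≤ t) (w : Fin m → ℝ) :
    ‖(NormedSpace.exp (t • Lk A ε κ)) w‖ ≤ Real.exp (-(κ * t)) * ‖w‖ := by
  rw [exp_Lk_eq, ContinuousLinearMap.smul_apply, norm_smul, Real.norm_eq_abs,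
    Real.abs_exp]
  exact mul_le_mul_of_nonneg_left (hC (t * ε ^ 2) (by positivity) w) (Real.exp_pos _).le

lemma lam_abs_le {m : ℕ} {v : Fin m → ℝ} (hv : ∀ i, |v i| ≤ 1) : |lam v| ≤ 1 := by
  have hg : ∀ i, 0 ≤ gpt (v i) := by
    intro i
    have := abs_le.mp (hv i)
    simp only [gpt]
    nlinarith [this.1, this.2]
  have hS : 0 ≤ ∑ i, gpt (v i) := Finset.sum_nonneg fun i _ => hg i
  have hF : |∑ i, fpt (v i)| ≤ ∑ i, gpt (v i) := by
    refine (Finset.abs_sum_le_sum_abs _ _).trans (Finset.sum_le_sum fun i _ => ?_)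
    have hx : |v i| ≤ 1 := hv i
    have : fpt (v i) = v i * gpt (v i) := by simp [fpt, gpt]; ring
    rw [this, abs_mul, abs_of_nonneg (hg i)]
    calc |v i| * gpt (v i) ≤ 1 * gpt (v i) :=
          mul_le_mul_of_nonneg_right hx (hg i)
      _ = gpt (v i) := one_mul _
  rcases eq_or_lt_of_le hS with h0 | hpos
  · have : ∑ i, fpt (v i) = 0 := by
      have := hF
      rw [← h0] at this
      exact abs_eq_zero.mp (le_antisymm this (abs_nonneg _))
    simp [lam, this]
  · rw [lam, abs_div, abs_of_pos hpos, div_le_one hpos]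
    exact hF

lemma Nk_comp_le {κ x l : ℝ} (hx : |x| ≤ 1) (hl : |l| ≤ 1) (hκ : 4 ≤ κ) :
    |κ * x + fpt x - l * gpt x| ≤ κ := by
  obtain ⟨hx1, hx2⟩ := abs_le.mp hx
  obtain ⟨hl1, hl2⟩ := abs_le.mp hl
  rw [abs_le]
  constructor
  · simp only [fpt, gpt]
    nlinarith [mul_nonneg (by linarith : (0:ℝ) ≤ 1 + x)
      (show (0:ℝ) ≤ κ + (1 - x) * (x - l) by
        nlinarith [mul_nonneg (by linarith : (0:ℝ) ≤ 1 - x) (by linarith : (0:ℝ) ≤ x - l + 2)])]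
  · simp only [fpt, gpt]
    nlinarith [mul_nonneg (by linarith : (0:ℝ) ≤ 1 - x)
      (show (0:ℝ) ≤ κ - (1 + x) * (x - l) by
        nlinarith [mul_nonneg (by linarith : (0:ℝ) ≤ 1 + x) (by linarith : (0:ℝ) ≤ 2 - (x - l))])]

lemma Nk_norm_le {m : ℕ} {κ : ℝ} (hκ : 4 ≤ κ) {v : Fin m → ℝ} (hv : ‖v‖ ≤ 1) :
    ‖Nk κ v‖ ≤ κ := by
  have hvi : ∀ i, |v i| ≤ 1 := fun i => by
    have := norm_le_pi_norm v i
    rw [Real.norm_eq_abs] at this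
    exact this.trans hv
  rw [pi_norm_le_iff_of_nonneg (by linarith)]
  intro i
  rw [Real.norm_eq_abs]
  exact Nk_comp_le (hvi i) (lam_abs_le hvi) hκ

/-- The main integral estimate. -/
lemma integral_exp_Lk_le {m : ℕ} {A : (Fin m → ℝ) →L[ℝ] (Fin m → ℝ)}
    (hC : ∀ t : ℝ, 0 ≤ t → ∀ v : Fin m → ℝ, ‖(NormedSpace.exp (t • A)) v‖ ≤ ‖v‖)
    {ε κ τ : ℝ} (hκ : 0 < κ) (hτ : 0 < τ) (C : ℝ → Fin m → ℝ) (hcont : Continuous C)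
    (hCb : ∀ s ∈ Set.Icc (0:ℝ) τ, ‖C s‖ ≤ κ) :
    ‖∫ s in (0:ℝ)..τ, (NormedSpace.exp ((τ - s) • Lk A ε κ)) (C s)‖ ≤
      1 - Real.exp (-(κ * τ)) := by
  have hint : Continuous fun s : ℝ =>
      (NormedSpace.exp ((τ - s) • Lk A ε κ)) (C s) := by
    apply Continuous.clm_apply _ hcont
    let +nondep : NormedAlgebra ℚ ((Fin m → ℝ) →L[ℝ] (Fin m → ℝ)) := .restrictScalars ℚ ℝ _
    exact NormedSpace.exp_continuous.comp ((continuous_const.sub continuous_id).smul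
      continuous_const)
  have hgcont : Continuous fun s : ℝ => Real.exp (κ * s - κ * τ) * κ := by
    exact (Real.continuous_exp.comp ((continuous_const.mul continuous_id).sub
      continuous_const)).mul continuous_const
  have key : (∫ s in (0:ℝ)..τ, Real.exp (κ * s - κ * τ) * κ) =
      1 - Real.exp (-(κ * τ)) := by
    have hderiv : ∀ s ∈ Set.uIcc (0:ℝ) τ,
        HasDerivAt (fun x : ℝ => Real.exp (κ * x - κ * τ))
          (Real.exp (κ * s - κ * τ) * κ) s := by
      intro s _
      have h := (((hasDerivAt_id s).const_mul κ).sub_const (κ * τ)).exp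
      simpa using h
    rw [intervalIntegral.integral_eq_sub_of_hasDerivAt hderiv
      (hgcont.intervalIntegrable _ _)]
    simp [mul_comm]
  calc ‖∫ s in (0:ℝ)..τ, (NormedSpace.exp ((τ - s) • Lk A ε κ)) (C s)‖
      ≤ ∫ s in (0:ℝ)..τ, ‖(NormedSpace.exp ((τ - s) • Lk A ε κ)) (C s)‖ :=
        intervalIntegral.norm_integral_le_integral_norm hτ.le
    _ ≤ ∫ s in (0:ℝ)..τ, Real.exp (κ * s - κ * τ) * κ := by
        apply intervalIntegral.integral_mono_on hτ.le
          (hint.norm.intervalIntegrable _ _) (hgcont.intervalIntegrable _ _)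
        intro s hs
        obtain ⟨hs0, hsτ⟩ := hs
        calc ‖(NormedSpace.exp ((τ - s) • Lk A ε κ)) (C s)‖
            ≤ Real.exp (-(κ * (τ - s))) * ‖C s‖ :=
              exp_Lk_apply_le hC ε κ (by linarith) (C s)
          _ ≤ Real.exp (κ * s - κ * τ) * κ := by
              rw [show -(κ * (τ - s)) = κ * s - κ * τ by ring]
              exact mul_le_mul_of_nonneg_left (hCb s ⟨hs0, hsτ⟩) (Real.exp_pos _).le
    _ = 1 - Real.exp (-(κ * τ)) := key

lemma Phi_norm_le {m : ℕ} {A : (Fin m → ℝ) →L[ℝ] (Fin m → ℝ)}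
    (hC : ∀ t : ℝ, 0 ≤ t → ∀ v : Fin m → ℝ, ‖(NormedSpace.exp (t • A)) v‖ ≤ ‖v‖)
    {ε κ τ : ℝ} (hκ : 4 ≤ κ) (hτ : 0 < τ) {v : Fin m → ℝ} (hv : ‖v‖ ≤ 1) :
    ‖Phi A ε κ τ v‖ ≤ 1 := by
  have hκ0 : (0:ℝ) < κ := by linarith
  have h1 : ‖(NormedSpace.exp (τ • Lk A ε κ)) v‖ ≤ Real.exp (-(κ * τ)) * 1 := by
    refine (exp_Lk_apply_le hC ε κ hτ.le v).trans ?_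
    exact mul_le_mul_of_nonneg_left hv (Real.exp_pos _).le
  have h2 := integral_exp_Lk_le hC (ε := ε) hκ0 hτ (fun _ => Nk κ v) continuous_const
    (fun s _ => Nk_norm_le hκ hv)
  calc ‖Phi A ε κ τ v‖ ≤ ‖(NormedSpace.exp (τ • Lk A ε κ)) v‖ +
        ‖∫ s in (0:ℝ)..τ, (NormedSpace.exp ((τ - s) • Lk A ε κ)) (Nk κ v)‖ :=
        norm_add_le _ _
    _ ≤ 1 := by linarith

lemma Psi_norm_le {m : ℕ} {A : (Fin m → ℝ) →L[ℝ] (Fin m → ℝ)}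
    (hC : ∀ t : ℝ, 0 ≤ t → ∀ v : Fin m → ℝ, ‖(NormedSpace.exp (t • A)) v‖ ≤ ‖v‖)
    {ε κ τ : ℝ} (hκ : 4 ≤ κ) (hτ : 0 < τ) {v : Fin m → ℝ} (hv : ‖v‖ ≤ 1) :
    ‖Psi A ε κ τ v‖ ≤ 1 := by
  have hκ0 : (0:ℝ) < κ := by linarith
  have hN1 : ‖Nk κ v‖ ≤ κ := Nk_norm_le hκ hv
  have hN2 : ‖Nk κ (Phi A ε κ τ v)‖ ≤ κ := Nk_norm_le hκ (Phi_norm_le hC hκ hτ hv)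
  have h1 : ‖(NormedSpace.exp (τ • Lk A ε κ)) v‖ ≤ Real.exp (-(κ * τ)) * 1 := by
    refine (exp_Lk_apply_le hC ε κ hτ.le v).trans ?_
    exact mul_le_mul_of_nonneg_left hv (Real.exp_pos _).le
  have h2 := integral_exp_Lk_le hC (ε := ε) hκ0 hτ
    (fun s => (1 - s / τ) • Nk κ v + (s / τ) • Nk κ (Phi A ε κ τ v))
    (((continuous_const.sub (continuous_id.div_const τ)).smul continuous_const).add
      ((continuous_id.div_const τ).smul continuous_const))
    (by
      intro s hs
      obtain ⟨hs0, hsτ⟩ := hs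
      have ha0 : 0 ≤ s / τ := div_nonneg hs0 hτ.le
      have ha1 : s / τ ≤ 1 := (div_le_one hτ).mpr hsτ
      calc ‖(1 - s / τ) • Nk κ v + (s / τ) • Nk κ (Phi A ε κ τ v)‖
          ≤ ‖(1 - s / τ) • Nk κ v‖ + ‖(s / τ) • Nk κ (Phi A ε κ τ v)‖ := norm_add_le _ _
        _ = |1 - s / τ| * ‖Nk κ v‖ + |s / τ| * ‖Nk κ (Phi A ε κ τ v)‖ := by
            rw [norm_smul, norm_smul, Real.norm_eq_abs, Real.norm_eq_abs]
        _ = (1 - s / τ) * ‖Nk κ v‖ + (s / τ) * ‖Nk κ (Phi A ε κ τ v)‖ := by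
            rw [abs_of_nonneg (by linarith), abs_of_nonneg ha0]
        _ ≤ (1 - s / τ) * κ + (s / τ) * κ := by
            gcongr <;> linarith
        _ = κ := by ring)
  calc ‖Psi A ε κ τ v‖ ≤ ‖(NormedSpace.exp (τ • Lk A ε κ)) v‖ +
        ‖∫ s in (0:ℝ)..τ, (NormedSpace.exp ((τ - s) • Lk A ε κ))
          ((1 - s / τ) • Nk κ v + (s / τ) • Nk κ (Phi A ε κ τ v))‖ := norm_add_le _ _
    _ ≤ 1 := by linarith

/-- Unconditional discrete maximum bound principle of the ETDRK2 scheme: ‖uⁿ‖_∞ ≤ 1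
for every n. -/
theorem stmt_10 (m : ℕ) (hm : 1 ≤ m) (A : (Fin m → ℝ) →L[ℝ] (Fin m → ℝ))
    (hC : ∀ t : ℝ, 0 ≤ t → ∀ v : Fin m → ℝ, ‖(NormedSpace.exp (t • A)) v‖ ≤ ‖v‖)
    (hS : ∀ v : Fin m → ℝ, ∑ i, A v i = 0)
    (κ ε τ : ℝ) (hκ : κ ≥ 4) (hε : ε > 0) (hτ : τ > 0)
    (u : ℕ → Fin m → ℝ) (hnorm0 : ‖u 0‖ ≤ 1) (hmass0 : |∑ i, u 0 i| < (m : ℝ))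
    (hstep : ∀ n : ℕ, u (n + 1) = Psi A ε κ τ (u n)) :
    ∀ n : ℕ, ‖u n‖ ≤ 1 := by
  intro n
  induction n with
  | zero => exact hnorm0
  | succ k ih =>
    rw [hstep k]
    exact Psi_norm_le hC hκ hτ ih
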